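/- Let ω be a primitive 2a-th root of unity in ℂ and let e ≥ 1. The number of indices i in {−e, −e+1, ..., e} with ω^{2i} = 1 equals 1 + 2⌊e/a⌋. Consequently, for the principal SL_2 acting on a simple Lie algebra with exponents e_1,...,e_r, the fixed space of the image of an element of order a has dimension Σ_{j=1}^r (1 + 2⌊e_j/a⌋), and the rank of (Id − Ad ρ₀(x)) equals dim G − Σ_{j=1}^r (1 + 2⌊e_j/a⌋). -/

import Mathlib

theorem principal_fixed_space_dimension (a e : ℕ) (ha : 0 < a) (he : 1 ≤ e)
    (ω : ℂ) (hω : IsPrimitiveRoot ω (2 * a)) :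
    (((Finset.Icc (-(e : ℤ)) (e : ℤ)).filter (fun i => ω ^ (2 * i) = 1)).card
        = 1 + 2 * (e / a)) ∧
    (∀ (r : ℕ) (E : Fin r → ℕ) (V : Type) (_ : AddCommGroup V), ∀ (_ : Module ℂ V)
        (_ : FiniteDimensional ℂ V) (f : V →ₗ[ℂ] V),
      Module.finrank ℂ V = ∑ j, (1 + 2 * E j) →
      Module.finrank ℂ (LinearMap.ker (f - 1)) = ∑ j, (1 + 2 * (E j / a)) →
      Module.finrank ℂ (LinearMap.range (1 - f))
        = (∑ j, (1 + 2 * E j)) - ∑ j, (1 + 2 * (E j / a))) := by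
  have ha' : (0 : ℤ) < (a : ℤ) := by exact_mod_cast ha
  constructor
  · have hcond : ∀ i : ℤ, (ω ^ (2 * i) = 1 ↔ (a : ℤ) ∣ i) := by
      intro i
      rw [hω.zpow_eq_one_iff_dvd]
      push_cast
      constructor
      · rintro ⟨c, hc⟩
        exact ⟨c, by linarith⟩
      · rintro ⟨c, hc⟩
        exact ⟨c, by rw [hc]; ring⟩
    have himg : (Finset.Icc (-(e : ℤ)) (e : ℤ)).filter (fun i => ω ^ (2 * i) = 1)
        = (Finset.Icc (-((e : ℤ) / a)) ((e : ℤ) / a)).image (fun k => (a : ℤ) * k) := by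
      ext i
      simp only [Finset.mem_filter, Finset.mem_Icc, Finset.mem_image, hcond]
      constructor
      · rintro ⟨⟨h1, h2⟩, c, rfl⟩
        refine ⟨c, ⟨?_, ?_⟩, by ring⟩
        · rw [neg_le, Int.le_ediv_iff_mul_le ha']
          linarith
        · rw [Int.le_ediv_iff_mul_le ha']; linarith
      · rintro ⟨c, ⟨h1, h2⟩, rfl⟩
        rw [Int.le_ediv_iff_mul_le ha'] at h2
        rw [neg_le, Int.le_ediv_iff_mul_le ha'] at h1
        exact ⟨⟨by linarith, by linarith⟩, c, rfl⟩
    rw [himg, Finset.card_image_of_injective _ (mul_right_injective₀ (by positivity)),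
      Int.card_Icc]
    have hge : (0 : ℤ) ≤ (e : ℤ) / a := Int.ediv_nonneg (by positivity) ha'.le
    have hdiv : ((e / a : ℕ) : ℤ) = (e : ℤ) / (a : ℤ) := Int.natCast_ediv e a
    omega
  · intro r E V _ _ _ f hV hker
    have hk : LinearMap.ker (1 - f) = LinearMap.ker (f - 1) := by
      ext v
      simp only [LinearMap.mem_ker, LinearMap.sub_apply, Module.End.one_apply, sub_eq_zero]
      exact eq_comm
    have := LinearMap.finrank_range_add_finrank_ker (1 - f)
    rw [hk, hker, hV] at this
    omega
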